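/- arXiv:2103.05362 — 2 statements merged into one kernel-verified Lean document; each statement's English description precedes it below -/
import Mathlib

section
/- For any real p×p matrices X and E, the matrix exponential of the 2p×2p block upper-triangular matrix [[X, E], [0, X]] equals the block matrix [[exp(X), L], [0, exp(X)]], where L is the Fréchet derivative of the matrix exponential at X applied to E, i.e., L = D exp(X)[E]. -/
open Matrix

attribute [local instance] Matrix.frobeniusNormedAddCommGroup Matrix.frobeniusNormedSpace

namespace ExpFromBlocksAux

attribute [local instance] Matrix.frobeniusNormedRing Matrix.frobeniusNormedAlgebra

open NormedSpace
open scoped Nat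

variable {p : ℕ}

/-- The top-right block of `(fromBlocks X E 0 X) ^ n`. -/
def c (X E : Matrix (Fin p) (Fin p) ℝ) : ℕ → Matrix (Fin p) (Fin p) ℝ
  | 0 => 0
  | n + 1 => X ^ n * E + c X E n * X

lemma c_smul (X E : Matrix (Fin p) (Fin p) ℝ) (t : ℝ) (n : ℕ) :
    c X (t • E) n = t • c X E n := by
  induction n with
  | zero => simp [c]
  | succ n ih => simp [c, ih, Matrix.mul_smul, Matrix.smul_mul, smul_add]

lemma pow_fromBlocks (X E : Matrix (Fin p) (Fin p) ℝ) (n : ℕ) :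
    (fromBlocks X E 0 X) ^ n = fromBlocks (X ^ n) (c X E n) 0 (X ^ n) := by
  induction n with
  | zero => simp [c, Matrix.fromBlocks_one]
  | succ n ih =>
      rw [pow_succ, ih, Matrix.fromBlocks_multiply]
      simp [c, pow_succ]

lemma pow_fromBlocks_diag (Y Z : Matrix (Fin p) (Fin p) ℝ) (n : ℕ) :
    (fromBlocks Y 0 0 Z) ^ n = fromBlocks (Y ^ n) 0 0 (Z ^ n) := by
  induction n with
  | zero => simp [Matrix.fromBlocks_one]
  | succ n ih =>
      rw [pow_succ, ih, Matrix.fromBlocks_multiply]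
      simp [pow_succ]

/-- The candidate derivative. -/
noncomputable def Phi (X E : Matrix (Fin p) (Fin p) ℝ) : Matrix (Fin p) (Fin p) ℝ :=
  ∑' n : ℕ, (n !⁻¹ : ℝ) • c X E n

/-- `toBlocks₁₂` as a continuous linear map. -/
noncomputable def tb12 : Matrix (Fin p ⊕ Fin p) (Fin p ⊕ Fin p) ℝ →L[ℝ] Matrix (Fin p) (Fin p) ℝ :=
  LinearMap.toContinuousLinearMap
    { toFun := fun A => A.toBlocks₁₂
      map_add' := fun _ _ => rfl
      map_smul' := fun _ _ => rfl }

@[simp] lemma tb12_apply (A : Matrix (Fin p ⊕ Fin p) (Fin p ⊕ Fin p) ℝ) :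
    tb12 A = A.toBlocks₁₂ := rfl

/-- block inclusion CLMs -/
noncomputable def e11 : Matrix (Fin p) (Fin p) ℝ →L[ℝ] Matrix (Fin p ⊕ Fin p) (Fin p ⊕ Fin p) ℝ :=
  LinearMap.toContinuousLinearMap
    { toFun := fun A => fromBlocks A 0 0 0
      map_add' := fun A B => by
        ext (i | i) (j | j) <;> simp [Matrix.fromBlocks]
      map_smul' := fun t A => by
        ext (i | i) (j | j) <;> simp [Matrix.fromBlocks] }

noncomputable def e12 : Matrix (Fin p) (Fin p) ℝ →L[ℝ] Matrix (Fin p ⊕ Fin p) (Fin p ⊕ Fin p) ℝ :=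
  LinearMap.toContinuousLinearMap
    { toFun := fun A => fromBlocks 0 A 0 0
      map_add' := fun A B => by
        ext (i | i) (j | j) <;> simp [Matrix.fromBlocks]
      map_smul' := fun t A => by
        ext (i | i) (j | j) <;> simp [Matrix.fromBlocks] }

noncomputable def e21 : Matrix (Fin p) (Fin p) ℝ →L[ℝ] Matrix (Fin p ⊕ Fin p) (Fin p ⊕ Fin p) ℝ :=
  LinearMap.toContinuousLinearMap
    { toFun := fun A => fromBlocks 0 0 A 0
      map_add' := fun A B => by
        ext (i | i) (j | j) <;> simp [Matrix.fromBlocks]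
      map_smul' := fun t A => by
        ext (i | i) (j | j) <;> simp [Matrix.fromBlocks] }

noncomputable def e22 : Matrix (Fin p) (Fin p) ℝ →L[ℝ] Matrix (Fin p ⊕ Fin p) (Fin p ⊕ Fin p) ℝ :=
  LinearMap.toContinuousLinearMap
    { toFun := fun A => fromBlocks 0 0 0 A
      map_add' := fun A B => by
        ext (i | i) (j | j) <;> simp [Matrix.fromBlocks]
      map_smul' := fun t A => by
        ext (i | i) (j | j) <;> simp [Matrix.fromBlocks] }

lemma e_sum (A B C D : Matrix (Fin p) (Fin p) ℝ) :
    e11 A + e12 B + e21 C + e22 D = fromBlocks A B C D := by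
  show fromBlocks A 0 0 0 + fromBlocks 0 B 0 0 + fromBlocks 0 0 C 0 + fromBlocks 0 0 0 D
      = fromBlocks A B C D
  simp [Matrix.fromBlocks_add]

lemma hasSum_fromBlocks {f g h k : ℕ → Matrix (Fin p) (Fin p) ℝ}
    {F G H K : Matrix (Fin p) (Fin p) ℝ} (hf : HasSum f F) (hg : HasSum g G)
    (hh : HasSum h H) (hk : HasSum k K) :
    HasSum (fun n => fromBlocks (f n) (g n) (h n) (k n)) (fromBlocks F G H K) := by
  have := (((hf.mapL e11).add (hg.mapL e12)).add (hh.mapL e21)).add (hk.mapL e22)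
  simpa only [e_sum] using this

lemma summable_c (X E : Matrix (Fin p) (Fin p) ℝ) :
    Summable fun n : ℕ => (n !⁻¹ : ℝ) • c X E n := by
  have hs : Summable (fun n : ℕ => (n !⁻¹ : ℝ) • (fromBlocks X E 0 X) ^ n) :=
    expSeries_summable' _
  have := (hs.hasSum.mapL tb12).summable
  refine this.congr fun n => ?_
  simp [pow_fromBlocks]

lemma hasSum_Phi (X E : Matrix (Fin p) (Fin p) ℝ) :
    HasSum (fun n : ℕ => (n !⁻¹ : ℝ) • c X E n) (Phi X E) :=
  (summable_c X E).hasSum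

lemma Phi_smul (X E : Matrix (Fin p) (Fin p) ℝ) (t : ℝ) : Phi X (t • E) = t • Phi X E := by
  have h := (hasSum_Phi X E).const_smul t
  have h2 : HasSum (fun n : ℕ => (n !⁻¹ : ℝ) • c X (t • E) n) (t • Phi X E) := by
    refine h.congr_fun fun n => ?_
    rw [c_smul, smul_comm]
  exact h2.tsum_eq

lemma Phi_zero (X : Matrix (Fin p) (Fin p) ℝ) : Phi X 0 = 0 := by
  simpa using Phi_smul X 0 0

lemma key_upper (X E : Matrix (Fin p) (Fin p) ℝ) :
    exp (fromBlocks X E 0 X) = fromBlocks (exp X) (Phi X E) 0 (exp X) := by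
  have htot : HasSum (fun n : ℕ => (n !⁻¹ : ℝ) • (fromBlocks X E 0 X) ^ n)
      (exp (fromBlocks X E 0 X)) := exp_series_hasSum_exp' _
  have hfb : HasSum (fun n : ℕ => (n !⁻¹ : ℝ) • (fromBlocks X E 0 X) ^ n)
      (fromBlocks (exp X) (Phi X E) 0 (exp X)) := by
    have := hasSum_fromBlocks (exp_series_hasSum_exp' (𝕂 := ℝ) X) (hasSum_Phi X E)
      (hasSum_zero (α := Matrix (Fin p) (Fin p) ℝ)) (exp_series_hasSum_exp' (𝕂 := ℝ) X)
    refine this.congr_fun fun n => ?_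
    rw [pow_fromBlocks, Matrix.fromBlocks_smul]
    simp
  exact htot.unique hfb

lemma key_diag (Y Z : Matrix (Fin p) (Fin p) ℝ) :
    exp (fromBlocks Y 0 0 Z) = fromBlocks (exp Y) 0 0 (exp Z) := by
  have htot : HasSum (fun n : ℕ => (n !⁻¹ : ℝ) • (fromBlocks Y 0 0 Z) ^ n)
      (exp (fromBlocks Y 0 0 Z)) := exp_series_hasSum_exp' _
  have hfb : HasSum (fun n : ℕ => (n !⁻¹ : ℝ) • (fromBlocks Y 0 0 Z) ^ n)
      (fromBlocks (exp Y) 0 0 (exp Z)) := by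
    have := hasSum_fromBlocks (exp_series_hasSum_exp' (𝕂 := ℝ) Y)
      (hasSum_zero (α := Matrix (Fin p) (Fin p) ℝ))
      (hasSum_zero (α := Matrix (Fin p) (Fin p) ℝ)) (exp_series_hasSum_exp' (𝕂 := ℝ) Z)
    refine this.congr_fun fun n => ?_
    rw [pow_fromBlocks_diag, Matrix.fromBlocks_smul]
    simp
  exact htot.unique hfb

lemma key_lower (X F : Matrix (Fin p) (Fin p) ℝ) :
    exp (fromBlocks X 0 F X) = fromBlocks (exp X) 0 ((Phi Xᵀ Fᵀ)ᵀ) (exp X) := by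
  have h1 : (fromBlocks X 0 F X)ᵀ = fromBlocks Xᵀ Fᵀ 0 Xᵀ := by
    rw [Matrix.fromBlocks_transpose]; simp
  have h2 : (exp (fromBlocks X 0 F X))ᵀ = fromBlocks (exp Xᵀ) (Phi Xᵀ Fᵀ) 0 (exp Xᵀ) := by
    rw [← Matrix.exp_transpose, h1, key_upper]
  have h3 := congrArg Matrix.transpose h2
  rw [Matrix.transpose_transpose, Matrix.fromBlocks_transpose] at h3
  rw [h3, ← Matrix.exp_transpose, Matrix.transpose_transpose]
  simp

end ExpFromBlocksAux
namespace ExpFromBlocksAux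
open NormedSpace
open scoped Nat
attribute [local instance] Matrix.frobeniusNormedRing Matrix.frobeniusNormedAlgebra
variable {p : ℕ}

lemma curve_deriv {m : Type*} [Fintype m] [DecidableEq m] (A N : Matrix m m ℝ) :
    HasDerivAt (fun t : ℝ => exp (A + t • N)) (fderiv ℝ (exp) A N) 0 := by
  have h1 : HasDerivAt (fun t : ℝ => A + t • N) N 0 := by
    have h := ((hasDerivAt_id (0 : ℝ)).smul_const N).const_add A; simp only [id, one_smul] at h; exact h
  have hd : DifferentiableAt ℝ (exp) (A + (0 : ℝ) • N) := by
    rw [zero_smul, add_zero]; exact (exp_analytic (𝕂 := ℝ) A).differentiableAt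
  have := (hd.hasFDerivAt.comp_hasDerivAt 0 h1)
  rw [zero_smul, add_zero] at this; exact this

lemma affine_deriv {m : Type*} [Fintype m] [DecidableEq m] (A N : Matrix m m ℝ) :
    HasDerivAt (fun t : ℝ => A + t • N) N 0 := by
  have h := ((hasDerivAt_id (0 : ℝ)).smul_const N).const_add A; simp only [id, one_smul] at h; exact h

lemma add_smul_up (X E : Matrix (Fin p) (Fin p) ℝ) (t : ℝ) :
    fromBlocks X 0 0 X + t • fromBlocks 0 E 0 0 = fromBlocks X (t • E) 0 X := by
  rw [Matrix.fromBlocks_smul, Matrix.fromBlocks_add]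
  simp

lemma fderiv_up (X E : Matrix (Fin p) (Fin p) ℝ) :
    fderiv ℝ (exp) (fromBlocks X 0 0 X) (fromBlocks 0 E 0 0)
      = fromBlocks 0 (Phi X E) 0 0 := by
  have hA := curve_deriv (fromBlocks X 0 0 X) (fromBlocks 0 E 0 0)
  have heq : (fun t : ℝ => exp (fromBlocks X 0 0 X + t • fromBlocks 0 E 0 0))
      = fun t : ℝ => fromBlocks (exp X) 0 0 (exp X) + t • fromBlocks 0 (Phi X E) 0 0 := by
    funext t
    rw [add_smul_up, key_upper, Phi_smul, add_smul_up (exp X) (Phi X E) t]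
  rw [heq] at hA
  exact (affine_deriv _ _).unique hA |>.symm

lemma fderiv_low (X F : Matrix (Fin p) (Fin p) ℝ) :
    fderiv ℝ (exp) (fromBlocks X 0 0 X) (fromBlocks 0 0 F 0)
      = fromBlocks 0 0 ((Phi Xᵀ Fᵀ)ᵀ) 0 := by
  have hA := curve_deriv (fromBlocks X 0 0 X) (fromBlocks 0 0 F 0)
  have hsm : ∀ t : ℝ, fromBlocks X 0 0 X + t • fromBlocks 0 0 F 0 = fromBlocks X 0 (t • F) X := by
    intro t; rw [Matrix.fromBlocks_smul, Matrix.fromBlocks_add]; simp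
  have heq : (fun t : ℝ => exp (fromBlocks X 0 0 X + t • fromBlocks 0 0 F 0))
      = fun t : ℝ => fromBlocks (exp X) 0 0 (exp X)
          + t • fromBlocks 0 0 ((Phi Xᵀ Fᵀ)ᵀ) 0 := by
    funext t
    rw [hsm t, key_lower]
    rw [Matrix.fromBlocks_smul, Matrix.fromBlocks_add]
    rw [Matrix.transpose_smul, Phi_smul]
    simp [Matrix.transpose_smul]
  rw [heq] at hA
  exact (affine_deriv _ _).unique hA |>.symm

lemma fderiv_diag (X A D : Matrix (Fin p) (Fin p) ℝ) :
    fderiv ℝ (exp) (fromBlocks X 0 0 X) (fromBlocks A 0 0 D)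
      = fromBlocks (fderiv ℝ (exp) X A) 0 0 (fderiv ℝ (exp) X D) := by
  have hA := curve_deriv (fromBlocks X 0 0 X) (fromBlocks A 0 0 D)
  have hsm : ∀ t : ℝ, fromBlocks X 0 0 X + t • fromBlocks A 0 0 D
      = fromBlocks (X + t • A) 0 0 (X + t • D) := by
    intro t; rw [Matrix.fromBlocks_smul, Matrix.fromBlocks_add]; simp
  have heq : (fun t : ℝ => exp (fromBlocks X 0 0 X + t • fromBlocks A 0 0 D))
      = fun t : ℝ => e11 (exp (X + t • A)) + e22 (exp (X + t • D)) := by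
    funext t
    rw [hsm t, key_diag]
    show _ = fromBlocks (exp (X + t • A)) 0 0 0 + fromBlocks 0 0 0 (exp (X + t • D))
    rw [Matrix.fromBlocks_add]
    simp
  rw [heq] at hA
  have hB : HasDerivAt
      (fun t : ℝ => e11 (exp (X + t • A)) + e22 (exp (X + t • D)))
      (e11 (fderiv ℝ (exp) X A) + e22 (fderiv ℝ (exp) X D)) 0 := by
    exact ((e11.hasFDerivAt.comp_hasDerivAt 0 (curve_deriv X A))).add
      ((e22.hasFDerivAt.comp_hasDerivAt 0 (curve_deriv X D)))
  have := hB.unique hA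
  rw [← this]
  show e11 _ + e22 _ = _
  rw [show (e11 (fderiv ℝ (exp) X A) : Matrix (Fin p ⊕ Fin p) (Fin p ⊕ Fin p) ℝ)
      = fromBlocks (fderiv ℝ (exp) X A) 0 0 0 from rfl,
    show (e22 (fderiv ℝ (exp) X D) : Matrix (Fin p ⊕ Fin p) (Fin p ⊕ Fin p) ℝ)
      = fromBlocks 0 0 0 (fderiv ℝ (exp) X D) from rfl,
    Matrix.fromBlocks_add]
  simp

end ExpFromBlocksAux
namespace ExpFromBlocksAux
open NormedSpace
open scoped Nat
attribute [local instance] Matrix.frobeniusNormedRing Matrix.frobeniusNormedAlgebra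
variable {p : ℕ}

/-- The conjugating matrix `[[1,0],[1,1]]`. -/
noncomputable def Tm (p : ℕ) : Matrix (Fin p ⊕ Fin p) (Fin p ⊕ Fin p) ℝ :=
  fromBlocks 1 0 1 1

noncomputable def Tinv (p : ℕ) : Matrix (Fin p ⊕ Fin p) (Fin p ⊕ Fin p) ℝ :=
  fromBlocks 1 0 (-1) 1

lemma Tm_mul_Tinv : Tm p * Tinv p = 1 := by
  rw [Tm, Tinv, Matrix.fromBlocks_multiply]
  simp [Matrix.fromBlocks_one]

lemma Tinv_mul_Tm : Tinv p * Tm p = 1 := by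
  rw [Tm, Tinv, Matrix.fromBlocks_multiply]
  simp [Matrix.fromBlocks_one]

/-- conjugation by `Tm` as a continuous linear map -/
noncomputable def conjT (p : ℕ) :
    Matrix (Fin p ⊕ Fin p) (Fin p ⊕ Fin p) ℝ →L[ℝ] Matrix (Fin p ⊕ Fin p) (Fin p ⊕ Fin p) ℝ :=
  LinearMap.toContinuousLinearMap
    ((LinearMap.mulRight ℝ (Tinv p)).comp (LinearMap.mulLeft ℝ (Tm p)))

@[simp] lemma conjT_apply (A : Matrix (Fin p ⊕ Fin p) (Fin p ⊕ Fin p) ℝ) :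
    conjT p A = Tm p * A * Tinv p := rfl

/-- the unit given by `Tm`. -/
noncomputable def Tu (p : ℕ) : (Matrix (Fin p ⊕ Fin p) (Fin p ⊕ Fin p) ℝ)ˣ :=
  ⟨Tm p, Tinv p, Tm_mul_Tinv, Tinv_mul_Tm⟩

lemma exp_conjT (A : Matrix (Fin p ⊕ Fin p) (Fin p ⊕ Fin p) ℝ) :
    exp (conjT p A) = conjT p (exp A) := by
  have := Matrix.exp_units_conj (Tu p) A
  simpa [Tu, conjT_apply] using this

lemma conjT_diag (X : Matrix (Fin p) (Fin p) ℝ) :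
    conjT p (fromBlocks X 0 0 X) = fromBlocks X 0 0 X := by
  rw [conjT_apply, Tm, Tinv, Matrix.fromBlocks_multiply, Matrix.fromBlocks_multiply]
  simp

lemma conjT_up (B : Matrix (Fin p) (Fin p) ℝ) :
    conjT p (fromBlocks 0 B 0 0) = fromBlocks (-B) B (-B) B := by
  rw [conjT_apply, Tm, Tinv, Matrix.fromBlocks_multiply, Matrix.fromBlocks_multiply]
  simp

lemma fderiv_conjT (X : Matrix (Fin p) (Fin p) ℝ)
    (v : Matrix (Fin p ⊕ Fin p) (Fin p ⊕ Fin p) ℝ) :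
    fderiv ℝ (exp) (fromBlocks X 0 0 X) (conjT p v)
      = conjT p (fderiv ℝ (exp) (fromBlocks X 0 0 X) v) := by
  set M₀ : Matrix (Fin p ⊕ Fin p) (Fin p ⊕ Fin p) ℝ := fromBlocks X 0 0 X with hM₀
  have hd : HasFDerivAt (exp) (fderiv ℝ (exp) M₀) M₀ :=
    (exp_analytic M₀).differentiableAt.hasFDerivAt
  have hA : HasFDerivAt (fun v => conjT p (exp v))
      ((conjT p).comp (fderiv ℝ (exp) M₀)) M₀ := (conjT p).hasFDerivAt.comp M₀ hd
  have hd' : HasFDerivAt (exp) (fderiv ℝ (exp) M₀) (conjT p M₀) := by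
    rw [conjT_diag]; exact hd
  have hB : HasFDerivAt (fun v => exp (conjT p v))
      ((fderiv ℝ (exp) M₀).comp (conjT p)) M₀ := hd'.comp M₀ (conjT p).hasFDerivAt
  have hfun : (fun v => exp (conjT p v)) = (fun v => conjT p (exp v)) := by
    funext v; exact exp_conjT v
  rw [hfun] at hB
  have := hA.unique hB
  exact (congrFun (congrArg DFunLike.coe this.symm) v)

lemma Phi_eq_fderiv (X E : Matrix (Fin p) (Fin p) ℝ) :
    Phi X E = fderiv ℝ (exp) X E := by
  have hdecomp : (fromBlocks (-E) E (-E) E : Matrix (Fin p ⊕ Fin p) (Fin p ⊕ Fin p) ℝ)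
      = fromBlocks 0 E 0 0 + fromBlocks 0 0 (-E) 0 + fromBlocks (-E) 0 0 E := by
    rw [Matrix.fromBlocks_add, Matrix.fromBlocks_add]
    simp
  have way1 : fderiv ℝ (exp) (fromBlocks X 0 0 X) (fromBlocks (-E) E (-E) E)
      = fromBlocks (-(Phi X E)) (Phi X E) (-(Phi X E)) (Phi X E) := by
    rw [← conjT_up E, fderiv_conjT, fderiv_up, conjT_up]
  have way2 : fderiv ℝ (exp) (fromBlocks X 0 0 X) (fromBlocks (-E) E (-E) E)
      = fromBlocks (fderiv ℝ (exp) X (-E)) (Phi X E) ((Phi Xᵀ (-E)ᵀ)ᵀ)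
          (fderiv ℝ (exp) X E) := by
    rw [hdecomp, (fderiv ℝ (exp) (fromBlocks X 0 0 X)).map_add,
      (fderiv ℝ (exp) (fromBlocks X 0 0 X)).map_add,
      fderiv_up, fderiv_low, fderiv_diag,
      Matrix.fromBlocks_add, Matrix.fromBlocks_add]
    simp
  have h := way1.symm.trans way2
  have h11 := congrArg Matrix.toBlocks₁₁ h
  simp only [Matrix.toBlocks_fromBlocks₁₁] at h11
  have : -(Phi X E) = -(fderiv ℝ (exp) X E) := by
    rw [h11, (fderiv ℝ (exp) X).map_neg]
  exact neg_inj.mp this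

end ExpFromBlocksAux

/-- The matrix exponential of the block upper-triangular matrix `[[X, E], [0, X]]` is
`[[exp X, L], [0, exp X]]`, where `L = D exp(X)[E]` is the Fréchet derivative of the matrix
exponential at `X` applied to `E`. -/
theorem exp_fromBlocks_eq {p : ℕ} (X E : Matrix (Fin p) (Fin p) ℝ) :
    NormedSpace.exp (Matrix.fromBlocks X E 0 X) =
      Matrix.fromBlocks (NormedSpace.exp X)
        (fderiv ℝ (NormedSpace.exp) X E) 0 (NormedSpace.exp X) := by
  have h := ExpFromBlocksAux.key_upper X E
  rw [ExpFromBlocksAux.Phi_eq_fderiv] at h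
  exact h
end

section
/- The geometry-aware singularity index with spherical reference ellipsoid decreases as the manipulability ellipsoid grows (in the Loewner order) while remaining dominated by the reference sphere: for every real number k > 0 and all real symmetric positive definite p×p matrices M₁ and M₂ such that M₂ − M₁ is positive semidefinite and k·I − M₂ is positive semidefinite, one has d(k·I, M₂) ≤ d(k·I, M₁). -/
open Matrix

attribute [local instance] Matrix.frobeniusNormedAddCommGroup Matrix.frobeniusNormedSpace

noncomputable def sqrtPD {p : ℕ} (S : Matrix (Fin p) (Fin p) ℝ) : Matrix (Fin p) (Fin p) ℝ :=
  letI := Classical.dec S.PosSemidef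
  if h : S.PosSemidef then
    h.1.eigenvectorUnitary.1 * diagonal ((↑) ∘ (√·) ∘ h.1.eigenvalues) *
      (star h.1.eigenvectorUnitary : Matrix (Fin p) (Fin p) ℝ)
  else 0

/-- The matrix logarithm, defined via the spectral (continuous) functional calculus by
applying the real logarithm to the eigenvalues. -/
noncomputable def matLog {p : ℕ} (M : Matrix (Fin p) (Fin p) ℝ) : Matrix (Fin p) (Fin p) ℝ :=
  cfc Real.log M

/-- The affine-invariant Riemannian distance
`d(Σ, Λ) = ‖log (Σ^{-1/2} Λ Σ^{-1/2})‖_F` (Frobenius norm). -/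
noncomputable def affDist {p : ℕ} (S L : Matrix (Fin p) (Fin p) ℝ) : ℝ :=
  ‖matLog ((sqrtPD S)⁻¹ * L * (sqrtPD S)⁻¹)‖

namespace AffAux

variable {p : ℕ}

open scoped MatrixOrder in
noncomputable def _root_.Matrix.PosSemidef.sqrt {A : Matrix (Fin p) (Fin p) ℝ}
    (_ : A.PosSemidef) : Matrix (Fin p) (Fin p) ℝ :=
  CFC.sqrt A

open scoped MatrixOrder in
lemma _root_.Matrix.PosSemidef.posSemidef_sqrt {A : Matrix (Fin p) (Fin p) ℝ}
    (hA : A.PosSemidef) : hA.sqrt.PosSemidef := by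
  exact Matrix.nonneg_iff_posSemidef.mp (CFC.sqrt_nonneg A)

open scoped MatrixOrder in
lemma _root_.Matrix.PosSemidef.sqrt_mul_self {A : Matrix (Fin p) (Fin p) ℝ}
    (hA : A.PosSemidef) : hA.sqrt * hA.sqrt = A := by
  exact CFC.sqrt_mul_sqrt_self A (Matrix.nonneg_iff_posSemidef.mpr hA)

/-! ### Generalities on quadratic forms and conjugation -/

lemma quad_conj_diag {A : Matrix (Fin p) (Fin p) ℝ} (hA : A.IsHermitian) (f : ℝ → ℝ)
    (x : Fin p → ℝ) :
    x ⬝ᵥ ((hA.eigenvectorUnitary : Matrix (Fin p) (Fin p) ℝ) * diagonal (f ∘ hA.eigenvalues) *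
      star (hA.eigenvectorUnitary : Matrix (Fin p) (Fin p) ℝ)) *ᵥ x
    = ∑ i, f (hA.eigenvalues i) *
        ((star (hA.eigenvectorUnitary : Matrix (Fin p) (Fin p) ℝ) *ᵥ x) i)^2 := by
  set U := (hA.eigenvectorUnitary : Matrix (Fin p) (Fin p) ℝ)
  set y := star U *ᵥ x with hy
  have h1 : (U * diagonal (f ∘ hA.eigenvalues) * star U) *ᵥ x
      = U *ᵥ (diagonal (f ∘ hA.eigenvalues) *ᵥ y) := by
    simp [hy, mulVec_mulVec, Matrix.mul_assoc]
  rw [h1]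
  have h2 : x ⬝ᵥ (U *ᵥ (diagonal (f ∘ hA.eigenvalues) *ᵥ y))
      = y ⬝ᵥ (diagonal (f ∘ hA.eigenvalues) *ᵥ y) := by
    rw [dotProduct_mulVec, hy]
    congr 1
    ext i
    simp [vecMul, mulVec, dotProduct, star, conjTranspose, mul_comm]
  rw [h2]
  simp only [dotProduct, mulVec_diagonal, Function.comp_apply]
  congr 1; ext i; ring

lemma conj_one {A : Matrix (Fin p) (Fin p) ℝ} (hA : A.IsHermitian) :
    (hA.eigenvectorUnitary : Matrix (Fin p) (Fin p) ℝ) * diagonal (fun _ => (1:ℝ)) *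
      star (hA.eigenvectorUnitary : Matrix (Fin p) (Fin p) ℝ) = 1 := by
  have h : diagonal (fun _ : Fin p => (1:ℝ)) = 1 := diagonal_one
  rw [h, Matrix.mul_one]
  exact (Matrix.mem_unitaryGroup_iff).mp hA.eigenvectorUnitary.2

lemma spectral {A : Matrix (Fin p) (Fin p) ℝ} (hA : A.IsHermitian) :
    A = (hA.eigenvectorUnitary : Matrix (Fin p) (Fin p) ℝ) * diagonal hA.eigenvalues *
      star (hA.eigenvectorUnitary : Matrix (Fin p) (Fin p) ℝ) := by
  have := hA.spectral_theorem
  rw [Unitary.conjStarAlgAut_apply] at this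
  exact this

/-- The affine combination `s•1 + (1-s)•A` as a conjugated diagonal matrix. -/
lemma affine_conj {A : Matrix (Fin p) (Fin p) ℝ} (hA : A.IsHermitian) (s : ℝ) :
    s • (1 : Matrix (Fin p) (Fin p) ℝ) + (1-s) • A
      = (hA.eigenvectorUnitary : Matrix (Fin p) (Fin p) ℝ) *
          diagonal (fun i => s + (1-s) * hA.eigenvalues i) *
        star (hA.eigenvectorUnitary : Matrix (Fin p) (Fin p) ℝ) := by
  set U := (hA.eigenvectorUnitary : Matrix (Fin p) (Fin p) ℝ)
  have hsm : ∀ (D : Matrix (Fin p) (Fin p) ℝ) (c : ℝ),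
      c • (U * D * star U) = U * (c • D) * star U := by
    intro D c
    rw [← Matrix.smul_mul, ← Matrix.mul_smul]
  conv_lhs => rw [spectral hA, ← conj_one hA]
  rw [hsm, hsm, ← Matrix.add_mul, ← Matrix.mul_add]
  congr 2
  ext i j
  by_cases h : i = j <;> simp [Matrix.diagonal, Matrix.one_apply, h, mul_comm]

lemma conj_inv {A : Matrix (Fin p) (Fin p) ℝ} (hA : A.IsHermitian) (d : Fin p → ℝ)
    (hd : ∀ i, d i ≠ 0) :
    ((hA.eigenvectorUnitary : Matrix (Fin p) (Fin p) ℝ) * diagonal d *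
      star (hA.eigenvectorUnitary : Matrix (Fin p) (Fin p) ℝ))⁻¹
    = (hA.eigenvectorUnitary : Matrix (Fin p) (Fin p) ℝ) * diagonal (fun i => (d i)⁻¹) *
      star (hA.eigenvectorUnitary : Matrix (Fin p) (Fin p) ℝ) := by
  apply Matrix.inv_eq_right_inv
  set U := (hA.eigenvectorUnitary : Matrix (Fin p) (Fin p) ℝ)
  have hU : star U * U = 1 := (Matrix.mem_unitaryGroup_iff'.mp hA.eigenvectorUnitary.2)
  calc U * diagonal d * star U * (U * diagonal (fun i => (d i)⁻¹) * star U)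
      = U * (diagonal d * (star U * U) * diagonal (fun i => (d i)⁻¹)) * star U := by
        simp only [Matrix.mul_assoc]
    _ = 1 := by
        rw [hU, Matrix.mul_one, diagonal_mul_diagonal]
        have : (fun i => d i * (d i)⁻¹) = fun _ : Fin p => (1:ℝ) := by
          ext i; exact mul_inv_cancel₀ (hd i)
        rw [this]
        exact conj_one hA

lemma matLog_eq {A : Matrix (Fin p) (Fin p) ℝ} (hA : A.IsHermitian) :
    matLog A = (hA.eigenvectorUnitary : Matrix (Fin p) (Fin p) ℝ) *
        diagonal (Real.log ∘ hA.eigenvalues) *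
      star (hA.eigenvectorUnitary : Matrix (Fin p) (Fin p) ℝ) := by
  rw [matLog, hA.cfc_eq, Matrix.IsHermitian.cfc]
  congr 1

lemma matLog_isHermitian {A : Matrix (Fin p) (Fin p) ℝ} (hA : A.IsHermitian) :
    (matLog A).IsHermitian := by
  rw [matLog_eq hA]
  exact Matrix.isHermitian_mul_mul_conjTranspose _ (isHermitian_diagonal _)

/-! ### Inverse is antitone for the Loewner order -/

lemma posDef_conj {A C : Matrix (Fin p) (Fin p) ℝ} (hA : A.PosDef) (hC : IsUnit C.det)
    (hCh : C.IsHermitian) : (C * A * C).PosDef := by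
  have hCC : C * A * C = Cᴴ * A * C := by rw [hCh.eq]
  rw [posDef_iff_dotProduct_mulVec]
  constructor
  · have := Matrix.isHermitian_conjTranspose_mul_mul C hA.1
    rwa [← hCC] at this
  · intro x hx
    have hCx : C *ᵥ x ≠ 0 := by
      intro h
      apply hx
      have hinj := Matrix.mulVec_injective_iff_isUnit.mpr ((Matrix.isUnit_iff_isUnit_det C).mpr hC)
      have h0 : C *ᵥ x = C *ᵥ 0 := by simpa using h
      exact hinj h0
    rw [hCC]
    simpa only [star_mulVec, dotProduct_mulVec, vecMul_vecMul] using hA.dotProduct_mulVec_pos hCx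

lemma isUnit_det_of_posDef {A : Matrix (Fin p) (Fin p) ℝ} (hA : A.PosDef) : IsUnit A.det :=
  isUnit_iff_ne_zero.mpr (ne_of_gt hA.det_pos)

lemma posDef_of_posSemidef_det_ne_zero {A : Matrix (Fin p) (Fin p) ℝ} (hA : A.PosSemidef)
    (h : IsUnit A.det) : A.PosDef := by
  refine posDef_iff_dotProduct_mulVec.mpr
    ⟨hA.1, fun x hx => lt_of_le_of_ne (hA.dotProduct_mulVec_nonneg x) fun h0 => ?_⟩
  have h1 : A *ᵥ x = 0 := (hA.dotProduct_mulVec_zero_iff x).mp h0.symm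
  have hinj := Matrix.mulVec_injective_iff_isUnit.mpr ((Matrix.isUnit_iff_isUnit_det A).mpr h)
  exact hx (hinj (by simpa using h1))

lemma sqrt_det_isUnit {A : Matrix (Fin p) (Fin p) ℝ} (hA : A.PosDef) :
    IsUnit hA.posSemidef.sqrt.det := by
  apply isUnit_iff_ne_zero.mpr
  intro h
  have h2 : hA.posSemidef.sqrt.det * hA.posSemidef.sqrt.det = A.det := by
    rw [← Matrix.det_mul, hA.posSemidef.sqrt_mul_self]
  rw [h, mul_zero] at h2
  exact ne_of_gt hA.det_pos h2.symm

lemma sqrt_posDef {A : Matrix (Fin p) (Fin p) ℝ} (hA : A.PosDef) :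
    hA.posSemidef.sqrt.PosDef :=
  posDef_of_posSemidef_det_ne_zero hA.posSemidef.posSemidef_sqrt (sqrt_det_isUnit hA)

/-- If `0 < X ≤ 1` then `1 ≤ X⁻¹`. -/
lemma inv_ge_one_of_le_one {X : Matrix (Fin p) (Fin p) ℝ} (hX : X.PosDef)
    (h1 : ((1 : Matrix (Fin p) (Fin p) ℝ) - X).PosSemidef) :
    (X⁻¹ - 1).PosSemidef := by
  set S := hX.posSemidef.sqrt with hSdef
  have hS : S.PosSemidef := hX.posSemidef.posSemidef_sqrt
  have hSd : IsUnit S.det := sqrt_det_isUnit hX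
  have hSS : S * S = X := hX.posSemidef.sqrt_mul_self
  have hXd : IsUnit X.det := isUnit_iff_ne_zero.mpr (ne_of_gt hX.det_pos)
  set R := S⁻¹ with hRdef
  have hSR : S * R = 1 := Matrix.mul_nonsing_inv S hSd
  have hRS : R * S = 1 := Matrix.nonsing_inv_mul S hSd
  have hRR : R * R = X⁻¹ := by rw [hRdef, ← Matrix.mul_inv_rev, hSS]
  have hXS : X * S = S * X := by rw [← hSS, Matrix.mul_assoc]
  have hXR : R * X = X * R := by
    calc R * X = R * X * (S * R) := by rw [hSR, Matrix.mul_one]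
    _ = R * (X * S) * R := by simp only [Matrix.mul_assoc]
    _ = R * (S * X) * R := by rw [hXS]
    _ = R * S * (X * R) := by simp only [Matrix.mul_assoc]
    _ = X * R := by rw [hRS, Matrix.one_mul]
  have hRXR : R * X * R = 1 := by
    rw [hXR, Matrix.mul_assoc, hRR, Matrix.mul_nonsing_inv X hXd]
  have hRh : R.IsHermitian := hS.1.inv
  have key : X⁻¹ - 1 = Rᴴ * ((1 : Matrix (Fin p) (Fin p) ℝ) - X) * R := by
    rw [hRh.eq, Matrix.mul_sub, Matrix.sub_mul, Matrix.mul_one, hRR, hRXR]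
  rw [key]
  exact h1.conjTranspose_mul_mul_same R

/-- Inverse is antitone: if `0 < A ≤ B` then `B⁻¹ ≤ A⁻¹`. -/
lemma inv_antitone {A B : Matrix (Fin p) (Fin p) ℝ} (hA : A.PosDef) (hB : B.PosDef)
    (hAB : (B - A).PosSemidef) : (A⁻¹ - B⁻¹).PosSemidef := by
  set S := hB.posSemidef.sqrt with hSdef
  have hS : S.PosSemidef := hB.posSemidef.posSemidef_sqrt
  have hSd : IsUnit S.det := sqrt_det_isUnit hB
  have hSS : S * S = B := hB.posSemidef.sqrt_mul_self
  set R := S⁻¹ with hRdef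
  have hRh : R.IsHermitian := hS.1.inv
  have hRd : IsUnit R.det := by
    exact (Matrix.isUnit_nonsing_inv_det_iff).mpr hSd
  have hSR : S * R = 1 := Matrix.mul_nonsing_inv S hSd
  have hRS : R * S = 1 := Matrix.nonsing_inv_mul S hSd
  -- X = R * A * R is positive definite with X ≤ 1
  set X := R * A * R with hXdef
  have hX : X.PosDef := posDef_conj hA hRd hRh
  have hRBR : R * B * R = 1 := by
    rw [← hSS, ← Matrix.mul_assoc, Matrix.mul_assoc (R * S), hSR, Matrix.mul_one, hRS]
  have h1X : ((1 : Matrix (Fin p) (Fin p) ℝ) - X).PosSemidef := by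
    have : (1 : Matrix (Fin p) (Fin p) ℝ) - X = Rᴴ * (B - A) * R := by
      rw [hRh.eq, Matrix.mul_sub, Matrix.sub_mul, hRBR, hXdef]
    rw [this]
    exact hAB.conjTranspose_mul_mul_same R
  have hXinv : X⁻¹ = S * A⁻¹ * S := by
    apply Matrix.inv_eq_right_inv
    have hAd : IsUnit A.det := isUnit_iff_ne_zero.mpr (ne_of_gt hA.det_pos)
    calc R * A * R * (S * A⁻¹ * S)
        = R * A * (R * S) * A⁻¹ * S := by simp only [Matrix.mul_assoc]
      _ = R * (A * A⁻¹) * S := by rw [hRS]; simp only [Matrix.mul_one, Matrix.mul_assoc]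
      _ = 1 := by rw [Matrix.mul_nonsing_inv A hAd, Matrix.mul_one, hRS]
  have hfin := (inv_ge_one_of_le_one hX h1X).conjTranspose_mul_mul_same R
  have : Rᴴ * (X⁻¹ - 1) * R = A⁻¹ - B⁻¹ := by
    rw [hRh.eq, Matrix.mul_sub, Matrix.sub_mul, hXinv, Matrix.mul_one]
    congr 1
    · calc R * (S * A⁻¹ * S) * R
          = (R * S) * A⁻¹ * (S * R) := by simp only [Matrix.mul_assoc]
        _ = A⁻¹ := by rw [hRS, hSR, Matrix.one_mul, Matrix.mul_one]
    · rw [hRdef, ← Matrix.mul_inv_rev, hSS]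
  rwa [this] at hfin

/-! ### The scalar integral -/

lemma denom_pos {l : ℝ} (hl : 0 < l) {s : ℝ} (hs : s ∈ Set.Icc (0:ℝ) 1) :
    0 < (1 - l) * s + l := by
  rcases hs with ⟨h0, h1⟩
  rcases le_or_gt l 1 with h | h
  · nlinarith
  · nlinarith

lemma scalar_integral {l : ℝ} (hl : 0 < l) :
    ∫ s in (0:ℝ)..1, (1 - l) / (s + (1 - s) * l) = - Real.log l := by
  have key : ∀ s ∈ Set.uIcc (0:ℝ) 1,
      HasDerivAt (fun t => Real.log ((1 - l) * t + l)) ((1 - l) / (s + (1 - s) * l)) s := by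
    intro s hs
    rw [Set.uIcc_of_le (by norm_num : (0:ℝ) ≤ 1)] at hs
    have hpos := denom_pos hl hs
    have h1 : HasDerivAt (fun t : ℝ => (1 - l) * t + l) (1 - l) s := by
      simpa using ((hasDerivAt_id s).const_mul (1 - l)).add_const l
    have h2 := (Real.hasDerivAt_log (ne_of_gt hpos)).comp s h1
    refine h2.congr_deriv ?_
    have : s + (1 - s) * l = (1 - l) * s + l := by ring
    rw [this]
    field_simp
  have hint : IntervalIntegrable (fun s => (1 - l) / (s + (1 - s) * l)) MeasureTheory.volume 0 1 := by
    apply ContinuousOn.intervalIntegrable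
    rw [Set.uIcc_of_le (by norm_num : (0:ℝ) ≤ 1)]
    apply ContinuousOn.div continuousOn_const
    · exact (continuousOn_id.add (continuousOn_const.sub continuousOn_id |>.mul continuousOn_const))
    · intro s hs
      have := denom_pos hl hs
      intro h0
      rw [show s + (1 - s) * l = (1 - l) * s + l from by ring] at h0
      exact (ne_of_gt this) h0
  rw [intervalIntegral.integral_eq_sub_of_hasDerivAt key hint]
  simp

/-! ### Smul lemmas -/

lemma isHermitian_smul {A : Matrix (Fin p) (Fin p) ℝ} (hA : A.IsHermitian) (c : ℝ) :
    (c • A).IsHermitian := by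
  unfold Matrix.IsHermitian
  rw [conjTranspose_smul, hA.eq]
  simp

lemma posSemidef_smul {A : Matrix (Fin p) (Fin p) ℝ} (hA : A.PosSemidef) {c : ℝ} (hc : 0 ≤ c) :
    (c • A).PosSemidef := by
  refine posSemidef_iff_dotProduct_mulVec.mpr ⟨isHermitian_smul hA.1 c, fun x => ?_⟩
  have := hA.dotProduct_mulVec_nonneg x
  simp only [smul_mulVec, dotProduct_smul, smul_eq_mul]
  positivity

lemma posDef_smul {A : Matrix (Fin p) (Fin p) ℝ} (hA : A.PosDef) {c : ℝ} (hc : 0 < c) :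
    (c • A).PosDef := by
  refine posDef_iff_dotProduct_mulVec.mpr ⟨isHermitian_smul hA.1 c, fun x hx => ?_⟩
  have := hA.dotProduct_mulVec_pos hx
  simp only [smul_mulVec, dotProduct_smul, smul_eq_mul]
  positivity

/-! ### Quadratic forms through the eigenbasis -/

lemma quad_matLog {A : Matrix (Fin p) (Fin p) ℝ} (hA : A.IsHermitian) (x : Fin p → ℝ) :
    x ⬝ᵥ matLog A *ᵥ x = ∑ i, Real.log (hA.eigenvalues i) *
      ((star (hA.eigenvectorUnitary : Matrix (Fin p) (Fin p) ℝ) *ᵥ x) i)^2 := by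
  rw [matLog_eq hA]
  exact quad_conj_diag hA Real.log x

lemma quad_id {A : Matrix (Fin p) (Fin p) ℝ} (hA : A.IsHermitian) (x : Fin p → ℝ) :
    x ⬝ᵥ x = ∑ i,
      ((star (hA.eigenvectorUnitary : Matrix (Fin p) (Fin p) ℝ) *ᵥ x) i)^2 := by
  have h := quad_conj_diag hA (fun _ => 1) x
  have h2 : diagonal ((fun _ => (1:ℝ)) ∘ hA.eigenvalues) = diagonal (fun _ => (1:ℝ)) := rfl
  rw [h2, conj_one hA] at h
  simpa using h

lemma quad_self {A : Matrix (Fin p) (Fin p) ℝ} (hA : A.IsHermitian) (x : Fin p → ℝ) :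
    x ⬝ᵥ A *ᵥ x = ∑ i, hA.eigenvalues i *
      ((star (hA.eigenvectorUnitary : Matrix (Fin p) (Fin p) ℝ) *ᵥ x) i)^2 := by
  have h := quad_conj_diag hA (fun t => t) x
  have h2 : diagonal ((fun t => t) ∘ hA.eigenvalues) = diagonal hA.eigenvalues := rfl
  rw [h2, ← spectral hA] at h
  exact h

lemma quad_affine_inv {A : Matrix (Fin p) (Fin p) ℝ} (hA : A.PosDef) {s : ℝ}
    (hs : s ∈ Set.Icc (0:ℝ) 1) (x : Fin p → ℝ) :
    x ⬝ᵥ ((s • (1 : Matrix (Fin p) (Fin p) ℝ) + (1-s) • A)⁻¹) *ᵥ x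
      = ∑ i, (s + (1-s) * hA.1.eigenvalues i)⁻¹ *
          ((star (hA.1.eigenvectorUnitary : Matrix (Fin p) (Fin p) ℝ) *ᵥ x) i)^2 := by
  have hd : ∀ i, s + (1-s) * hA.1.eigenvalues i ≠ 0 := by
    intro i
    have h1 : 0 < (1 - hA.1.eigenvalues i) * s + hA.1.eigenvalues i :=
      denom_pos (hA.eigenvalues_pos i) hs
    intro h0
    rw [show s + (1-s) * hA.1.eigenvalues i
        = (1 - hA.1.eigenvalues i) * s + hA.1.eigenvalues i from by ring] at h0
    exact (ne_of_gt h1) h0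
  rw [affine_conj hA.1 s, conj_inv hA.1 _ hd]
  have h := quad_conj_diag hA.1 (fun t => (s + (1-s) * t)⁻¹) x
  have h2 : diagonal ((fun t => (s + (1-s) * t)⁻¹) ∘ hA.1.eigenvalues)
      = diagonal (fun i => (s + (1-s) * hA.1.eigenvalues i)⁻¹) := rfl
  rw [h2] at h
  exact h

/-! ### The integrand φ -/

/-- The integrand whose integral over `[0,1]` recovers `-xᵀ (log A) x`. -/
noncomputable def phi {A : Matrix (Fin p) (Fin p) ℝ} (hA : A.PosDef) (x : Fin p → ℝ) (s : ℝ) :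
    ℝ :=
  ∑ i, (1 - hA.1.eigenvalues i) / (s + (1-s) * hA.1.eigenvalues i) *
    ((star (hA.1.eigenvectorUnitary : Matrix (Fin p) (Fin p) ℝ) *ᵥ x) i)^2

lemma phi_term_integrable {A : Matrix (Fin p) (Fin p) ℝ} (hA : A.PosDef) (x : Fin p → ℝ)
    (i : Fin p) :
    IntervalIntegrable (fun s => (1 - hA.1.eigenvalues i) / (s + (1-s) * hA.1.eigenvalues i) *
      ((star (hA.1.eigenvectorUnitary : Matrix (Fin p) (Fin p) ℝ) *ᵥ x) i)^2)
      MeasureTheory.volume 0 1 := by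
  apply ContinuousOn.intervalIntegrable
  rw [Set.uIcc_of_le (by norm_num : (0:ℝ) ≤ 1)]
  apply ContinuousOn.mul _ continuousOn_const
  apply ContinuousOn.div continuousOn_const
  · exact continuousOn_id.add ((continuousOn_const.sub continuousOn_id).mul continuousOn_const)
  · intro s hs
    have h1 := denom_pos (hA.eigenvalues_pos i) hs
    intro h0
    rw [show s + (1-s) * hA.1.eigenvalues i
        = (1 - hA.1.eigenvalues i) * s + hA.1.eigenvalues i from by ring] at h0
    exact (ne_of_gt h1) h0

lemma phi_integrable {A : Matrix (Fin p) (Fin p) ℝ} (hA : A.PosDef) (x : Fin p → ℝ) :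
    IntervalIntegrable (phi hA x) MeasureTheory.volume 0 1 := by
  have heq : phi hA x = ∑ i : Fin p, (fun s =>
      (1 - hA.1.eigenvalues i) / (s + (1-s) * hA.1.eigenvalues i) *
      ((star (hA.1.eigenvectorUnitary : Matrix (Fin p) (Fin p) ℝ) *ᵥ x) i)^2) := by
    ext s
    rw [Finset.sum_apply]
    rfl
  rw [heq]
  exact IntervalIntegrable.sum Finset.univ (fun i _ => phi_term_integrable hA x i)

lemma phi_integral {A : Matrix (Fin p) (Fin p) ℝ} (hA : A.PosDef) (x : Fin p → ℝ) :
    ∫ s in (0:ℝ)..1, phi hA x s = - (x ⬝ᵥ matLog A *ᵥ x) := by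
  unfold phi
  rw [intervalIntegral.integral_finset_sum
    (f := fun i s => (1 - hA.1.eigenvalues i) / (s + (1-s) * hA.1.eigenvalues i) *
      ((star (hA.1.eigenvectorUnitary : Matrix (Fin p) (Fin p) ℝ) *ᵥ x) i)^2)
    (fun i _ => phi_term_integrable hA x i)]
  rw [quad_matLog hA.1 x, ← Finset.sum_neg_distrib]
  refine Finset.sum_congr rfl fun i _ => ?_
  rw [intervalIntegral.integral_mul_const, scalar_integral (hA.eigenvalues_pos i)]
  ring

lemma phi_one {A : Matrix (Fin p) (Fin p) ℝ} (hA : A.PosDef) (x : Fin p → ℝ) :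
    phi hA x 1 = x ⬝ᵥ x - x ⬝ᵥ A *ᵥ x := by
  unfold phi
  rw [quad_id hA.1 x, quad_self hA.1 x, ← Finset.sum_sub_distrib]
  refine Finset.sum_congr rfl fun i _ => ?_
  have : (1:ℝ) + (1-1) * hA.1.eigenvalues i = 1 := by ring
  rw [this]
  ring

lemma phi_lt_one_eq {A : Matrix (Fin p) (Fin p) ℝ} (hA : A.PosDef) (x : Fin p → ℝ) {s : ℝ}
    (hs0 : 0 ≤ s) (hs1 : s < 1) :
    phi hA x s = (1-s)⁻¹ * ((x ⬝ᵥ ((s • (1 : Matrix (Fin p) (Fin p) ℝ) + (1-s) • A)⁻¹) *ᵥ x)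
      - x ⬝ᵥ x) := by
  rw [quad_affine_inv hA ⟨hs0, hs1.le⟩ x, quad_id hA.1 x, ← Finset.sum_sub_distrib,
    Finset.mul_sum]
  unfold phi
  refine Finset.sum_congr rfl fun i _ => ?_
  have hd : 0 < s + (1-s) * hA.1.eigenvalues i := by
    have := denom_pos (hA.eigenvalues_pos i) (Set.mem_Icc.mpr ⟨hs0, hs1.le⟩)
    linarith [this, show (1 - hA.1.eigenvalues i) * s + hA.1.eigenvalues i
      = s + (1-s) * hA.1.eigenvalues i from by ring]
  have h1s : (1:ℝ) - s ≠ 0 := by linarith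
  have hd' : s + (1-s) * hA.1.eigenvalues i ≠ 0 := hd.ne'
  have hd'' : hA.1.eigenvalues i - hA.1.eigenvalues i * s + s ≠ 0 := by
    intro h0; apply hd'; linarith
  rw [show (s + (1-s) * hA.1.eigenvalues i)⁻¹ *
      ((star (hA.1.eigenvectorUnitary : Matrix (Fin p) (Fin p) ℝ) *ᵥ x) i)^2 -
      ((star (hA.1.eigenvectorUnitary : Matrix (Fin p) (Fin p) ℝ) *ᵥ x) i)^2
    = ((s + (1-s) * hA.1.eigenvalues i)⁻¹ - 1) *
      ((star (hA.1.eigenvectorUnitary : Matrix (Fin p) (Fin p) ℝ) *ᵥ x) i)^2 from by ring]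
  rw [← mul_assoc]
  congr 1
  field_simp
  linear_combination (-1 : ℝ) * mul_inv_cancel₀ hd''

lemma quad_nonneg_of_posSemidef {M : Matrix (Fin p) (Fin p) ℝ} (hM : M.PosSemidef)
    (x : Fin p → ℝ) : 0 ≤ x ⬝ᵥ M *ᵥ x := by
  have := hM.dotProduct_mulVec_nonneg x
  simpa using this

/-- Pointwise comparison of the integrands. -/
lemma phi_le {A B : Matrix (Fin p) (Fin p) ℝ} (hA : A.PosDef) (hB : B.PosDef)
    (hAB : (B - A).PosSemidef) (x : Fin p → ℝ) {s : ℝ} (hs : s ∈ Set.Icc (0:ℝ) 1) :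
    phi hB x s ≤ phi hA x s := by
  rcases hs with ⟨hs0, hs1⟩
  rcases eq_or_lt_of_le hs1 with h | h
  · subst h
    rw [phi_one hA x, phi_one hB x]
    have h0 := quad_nonneg_of_posSemidef hAB x
    rw [Matrix.sub_mulVec, dotProduct_sub] at h0
    linarith
  · -- s < 1
    have h1s : 0 < 1 - s := by linarith
    set CA := s • (1 : Matrix (Fin p) (Fin p) ℝ) + (1-s) • A with hCA
    set CB := s • (1 : Matrix (Fin p) (Fin p) ℝ) + (1-s) • B with hCB
    have hCA' : CA.PosDef :=
      Matrix.PosDef.posSemidef_add (posSemidef_smul Matrix.PosSemidef.one hs0)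
        (posDef_smul hA h1s)
    have hCB' : CB.PosDef :=
      Matrix.PosDef.posSemidef_add (posSemidef_smul Matrix.PosSemidef.one hs0)
        (posDef_smul hB h1s)
    have hsub : (CB - CA).PosSemidef := by
      have : CB - CA = (1-s) • (B - A) := by
        rw [hCA, hCB, smul_sub]
        abel
      rw [this]
      exact posSemidef_smul hAB h1s.le
    have hinv := inv_antitone hCA' hCB' hsub
    have hq := quad_nonneg_of_posSemidef hinv x
    rw [Matrix.sub_mulVec, dotProduct_sub] at hq
    rw [phi_lt_one_eq hA x hs0 h, phi_lt_one_eq hB x hs0 h]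
    apply mul_le_mul_of_nonneg_left _ (inv_nonneg.mpr h1s.le)
    linarith

/-- Operator monotonicity of the matrix logarithm. -/
lemma matLog_mono {A B : Matrix (Fin p) (Fin p) ℝ} (hA : A.PosDef) (hB : B.PosDef)
    (hAB : (B - A).PosSemidef) : (matLog B - matLog A).PosSemidef := by
  refine posSemidef_iff_dotProduct_mulVec.mpr ⟨(matLog_isHermitian hB.1).sub (matLog_isHermitian hA.1), fun x => ?_⟩
  have hI : ∫ s in (0:ℝ)..1, phi hB x s ≤ ∫ s in (0:ℝ)..1, phi hA x s :=
    intervalIntegral.integral_mono_on (by norm_num) (phi_integrable hB x)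
      (phi_integrable hA x) (fun s hs => phi_le hA hB hAB x hs)
  rw [phi_integral hA x, phi_integral hB x] at hI
  have : x ⬝ᵥ (matLog B - matLog A) *ᵥ x = x ⬝ᵥ matLog B *ᵥ x - x ⬝ᵥ matLog A *ᵥ x := by
    rw [Matrix.sub_mulVec, dotProduct_sub]
  simpa [this] using (by linarith : 0 ≤ x ⬝ᵥ matLog B *ᵥ x - x ⬝ᵥ matLog A *ᵥ x)

lemma matLog_one : matLog (1 : Matrix (Fin p) (Fin p) ℝ) = 0 := by
  rw [matLog, show (1 : Matrix (Fin p) (Fin p) ℝ) = algebraMap ℝ _ 1 from by simp,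
    cfc_algebraMap (A := Matrix (Fin p) (Fin p) ℝ) 1 Real.log]
  simp


/-! ### Frobenius norm comparison via traces -/

lemma psd_trace_nonneg {W : Matrix (Fin p) (Fin p) ℝ} (hW : W.PosSemidef) : 0 ≤ W.trace := by
  rw [Matrix.trace]
  apply Finset.sum_nonneg
  intro i _
  have h := hW.dotProduct_mulVec_nonneg (Pi.single i 1)
  simpa [dotProduct, mulVec, Pi.single_apply, Finset.sum_ite_eq, Matrix.diag] using h

lemma trace_mul_psd_nonneg {X Z : Matrix (Fin p) (Fin p) ℝ} (hX : X.PosSemidef)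
    (hZ : Z.PosSemidef) : 0 ≤ (X * Z).trace := by
  set S := hX.sqrt with hSdef
  have hSS : S * S = X := hX.sqrt_mul_self
  have hSh : S.IsHermitian := hX.posSemidef_sqrt.1
  have hW : (Sᴴ * Z * S).PosSemidef := hZ.conjTranspose_mul_mul_same S
  have htr : (Sᴴ * Z * S).trace = (X * Z).trace := by
    rw [Matrix.trace_mul_cycle, hSh.eq, hSS]
  rw [← htr]
  exact psd_trace_nonneg hW

lemma frobenius_norm_sq_eq_trace {X : Matrix (Fin p) (Fin p) ℝ} (hX : X.IsHermitian) :
    ‖X‖^2 = (X * X).trace := by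
  have hs : (0:ℝ) ≤ ∑ i, ∑ j, ‖X i j‖ ^ (2:ℝ) := by
    apply Finset.sum_nonneg; intro i _
    apply Finset.sum_nonneg; intro j _
    exact Real.rpow_nonneg (norm_nonneg _) _
  have h1 : ‖X‖^2 = ∑ i, ∑ j, ‖X i j‖ ^ (2:ℝ) := by
    rw [Matrix.frobenius_norm_def, ← Real.rpow_natCast ((∑ i, ∑ j, ‖X i j‖ ^ (2:ℝ)) ^ (1/2:ℝ)) 2,
      ← Real.rpow_mul hs]
    norm_num
  have h2 : ∀ i j, ‖X i j‖ ^ (2:ℝ) = X i j * X j i := by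
    intro i j
    have hsym : X j i = X i j := by
      have := hX.apply i j
      simpa using this
    have hn : ‖X i j‖ ^ (2:ℝ) = ‖X i j‖ ^ (2:ℕ) := by
      rw [← Real.rpow_natCast ‖X i j‖ 2]; norm_num
    rw [hsym, hn, Real.norm_eq_abs, sq_abs, sq]
  rw [h1]
  simp_rw [h2]
  rw [Matrix.trace]
  simp [Matrix.diag, Matrix.mul_apply]

lemma frobenius_norm_mono_psd {X Y : Matrix (Fin p) (Fin p) ℝ} (hX : X.PosSemidef)
    (hY : Y.PosSemidef) (hXY : (Y - X).PosSemidef) : ‖X‖ ≤ ‖Y‖ := by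
  have h1 : 0 ≤ (X * (Y - X)).trace := trace_mul_psd_nonneg hX hXY
  have h2 : 0 ≤ ((Y - X) * Y).trace := trace_mul_psd_nonneg hXY hY
  rw [Matrix.mul_sub, Matrix.trace_sub] at h1
  rw [Matrix.sub_mul, Matrix.trace_sub] at h2
  have h3 : (X * Y).trace = (Y * X).trace := Matrix.trace_mul_comm X Y
  have hsq : ‖X‖^2 ≤ ‖Y‖^2 := by
    rw [frobenius_norm_sq_eq_trace hX.1, frobenius_norm_sq_eq_trace hY.1]
    linarith
  nlinarith [norm_nonneg X, norm_nonneg Y]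

end AffAux

/-- The geometry-aware singularity index with spherical reference decreases as the
manipulability ellipsoid grows in the Loewner order while staying dominated by `k·I`. -/
theorem affDist_smul_one_antitone {p : ℕ} (k : ℝ) (hk : 0 < k)
    (M₁ M₂ : Matrix (Fin p) (Fin p) ℝ) (hM₁ : M₁.PosDef) (hM₂ : M₂.PosDef)
    (h₁₂ : (M₂ - M₁).PosSemidef)
    (h₂k : (k • (1 : Matrix (Fin p) (Fin p) ℝ) - M₂).PosSemidef) :
    affDist (k • (1 : Matrix (Fin p) (Fin p) ℝ)) M₂ ≤
      affDist (k • (1 : Matrix (Fin p) (Fin p) ℝ)) M₁ := by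
  classical
  have hk1 : (k • (1 : Matrix (Fin p) (Fin p) ℝ)).PosSemidef :=
    AffAux.posSemidef_smul Matrix.PosSemidef.one hk.le
  have hsknz : Real.sqrt k ≠ 0 := ne_of_gt (Real.sqrt_pos.mpr hk)
  have hsqpsd : ((Real.sqrt k) • (1 : Matrix (Fin p) (Fin p) ℝ)).PosSemidef :=
    AffAux.posSemidef_smul Matrix.PosSemidef.one (Real.sqrt_nonneg k)
  have hsq : sqrtPD (k • (1 : Matrix (Fin p) (Fin p) ℝ))
      = Real.sqrt k • (1 : Matrix (Fin p) (Fin p) ℝ) := by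
    rw [sqrtPD]
    rw [dif_pos hk1]
    have hc := hk1.1.cfc_eq Real.sqrt
    rw [Matrix.IsHermitian.cfc, Unitary.conjStarAlgAut_apply] at hc
    calc _ = cfc Real.sqrt (k • (1 : Matrix (Fin p) (Fin p) ℝ)) := by rw [hc]; rfl
      _ = _ := by
        rw [← Algebra.algebraMap_eq_smul_one, ← Algebra.algebraMap_eq_smul_one,
          cfc_algebraMap (A := Matrix (Fin p) (Fin p) ℝ) k Real.sqrt]
  have hsqinv : (sqrtPD (k • (1 : Matrix (Fin p) (Fin p) ℝ)))⁻¹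
      = (Real.sqrt k)⁻¹ • (1 : Matrix (Fin p) (Fin p) ℝ) := by
    rw [hsq]
    apply Matrix.inv_eq_right_inv
    rw [Matrix.smul_mul, Matrix.mul_smul, Matrix.one_mul, smul_smul,
      mul_inv_cancel₀ hsknz, one_smul]
  have harg : ∀ M : Matrix (Fin p) (Fin p) ℝ,
      (sqrtPD (k • (1 : Matrix (Fin p) (Fin p) ℝ)))⁻¹ * M *
        (sqrtPD (k • (1 : Matrix (Fin p) (Fin p) ℝ)))⁻¹ = k⁻¹ • M := by
    intro M
    rw [hsqinv, Matrix.smul_mul, Matrix.mul_smul, Matrix.one_mul, Matrix.mul_one, smul_smul,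
      ← mul_inv, Real.mul_self_sqrt hk.le]
  set A := k⁻¹ • M₁ with hAdef
  set B := k⁻¹ • M₂ with hBdef
  have hkinv : (0:ℝ) < k⁻¹ := inv_pos.mpr hk
  have hA : A.PosDef := AffAux.posDef_smul hM₁ hkinv
  have hB : B.PosDef := AffAux.posDef_smul hM₂ hkinv
  have hBA : (B - A).PosSemidef := by
    rw [hAdef, hBdef, ← smul_sub]
    exact AffAux.posSemidef_smul h₁₂ hkinv.le
  have h1B : ((1 : Matrix (Fin p) (Fin p) ℝ) - B).PosSemidef := by
    have : (1 : Matrix (Fin p) (Fin p) ℝ) - B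
        = k⁻¹ • (k • (1 : Matrix (Fin p) (Fin p) ℝ) - M₂) := by
      rw [hBdef, smul_sub, smul_smul, inv_mul_cancel₀ (ne_of_gt hk), one_smul]
    rw [this]
    exact AffAux.posSemidef_smul h₂k hkinv.le
  have hmono : (matLog B - matLog A).PosSemidef := AffAux.matLog_mono hA hB hBA
  have hlogB : (-(matLog B)).PosSemidef := by
    have := AffAux.matLog_mono hB Matrix.PosDef.one h1B
    rwa [AffAux.matLog_one, zero_sub] at this
  have hlogA : (-(matLog A)).PosSemidef := by
    have heq : -(matLog A) = -(matLog B) + (matLog B - matLog A) := by abel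
    rw [heq]
    exact hlogB.add hmono
  have hdiff : ((-(matLog A)) - (-(matLog B))).PosSemidef := by
    have heq : (-(matLog A)) - (-(matLog B)) = matLog B - matLog A := by abel
    rw [heq]
    exact hmono
  have hnorm : ‖matLog B‖ ≤ ‖matLog A‖ := by
    rw [← norm_neg (matLog B), ← norm_neg (matLog A)]
    exact AffAux.frobenius_norm_mono_psd hlogB hlogA hdiff
  unfold affDist
  rw [harg M₂, harg M₁]
  exact hnorm
end
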